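/- Unique maximizer of expected execution profits among deterministic strategies: Assume G(0) > 0, each W_k is integrable with E[W_k] = 0, and the impact matrix M with entries M_{ij} = G(|t_i − t_j|) is symmetric positive definite. Then the expected execution profits V^ξ := −E[∑_{k=0}^{N} ((P_{k+})² − (P_k)²)/(2·G(0))] (where P_k := p₀ + σ_W·W_k + ∑_{j<k} G(t_k − t_j)·ξ_j and P_{k+} := P_k + G(0)·ξ_k), considered over deterministic strategies ξ ∈ ℝ^{N+1} with ∑_{k=0}^{N} ξ_k = −X₀, are uniquely maximized by ξ* := −(X₀/(𝟙ᵀM⁻¹𝟙))·M⁻¹𝟙: V^{ξ*} ≥ V^ξ for every admissible deterministic ξ, with equality if and only if ξ = ξ*. -/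

import Mathlib

open MeasureTheory Matrix

/-- **Unique maximizer of expected execution profits among deterministic strategies.**
If `G(0) > 0`, the noise has zero mean, and the impact matrix
`M i j = G(|tᵢ − tⱼ|)` is symmetric positive definite, then among deterministic
strategies `ξ` with `∑ ξₖ = −X₀` the expected execution profits `V ξ` are uniquely
maximized by `ξ* := −(X₀/(𝟙ᵀM⁻¹𝟙))·M⁻¹𝟙`. -/
theorem unique_maximizer_expected_profits
    (N : ℕ) (t : Fin (N + 1) → ℝ) (ht : StrictMono t)
    (G : ℝ → ℝ) (hG : 0 < G 0) (X₀ p₀ σW : ℝ)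
    {Ω : Type*} [MeasurableSpace Ω] (μ : Measure Ω) [IsProbabilityMeasure μ]
    (W : Fin (N + 1) → Ω → ℝ)
    (hWint : ∀ k, Integrable (W k) μ)
    (hWmean : ∀ k, ∫ ω, W k ω ∂μ = 0)
    (M : Matrix (Fin (N + 1)) (Fin (N + 1)) ℝ)
    (hM : M = Matrix.of fun i j => G |t i - t j|)
    (hsymm : M.IsSymm) (hpd : M.PosDef)
    (one : Fin (N + 1) → ℝ) (hone : one = fun _ => 1)
    (V : (Fin (N + 1) → ℝ) → ℝ)
    (hV : ∀ ξ : Fin (N + 1) → ℝ,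
      V ξ = -∫ ω, ∑ k,
        (((p₀ + σW * W k ω + ∑ j ∈ Finset.Iio k, G (t k - t j) * ξ j) + G 0 * ξ k) ^ 2
          - (p₀ + σW * W k ω + ∑ j ∈ Finset.Iio k, G (t k - t j) * ξ j) ^ 2)
        / (2 * G 0) ∂μ)
    (ξstar : Fin (N + 1) → ℝ)
    (hξstar : ξstar = fun i => -(X₀ / (one ⬝ᵥ (M⁻¹ *ᵥ one))) * (M⁻¹ *ᵥ one) i) :
    (∑ k, ξstar k = -X₀) ∧
    (∀ ξ : Fin (N + 1) → ℝ, ∑ k, ξ k = -X₀ →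
      V ξ ≤ V ξstar ∧ (V ξ = V ξstar ↔ ξ = ξstar)) := by
  classical
  have hG2 : (2 * G 0) ≠ 0 := by positivity
  set y : Fin (N + 1) → ℝ := M⁻¹ *ᵥ one with hy
  set c : ℝ := one ⬝ᵥ y with hc
  have hdet : IsUnit M.det := isUnit_iff_ne_zero.2 hpd.det_pos.ne'
  have hMy : M *ᵥ y = one := by
    rw [hy, Matrix.mulVec_mulVec, Matrix.mul_nonsing_inv M hdet, Matrix.one_mulVec]
  have hone_ne : one ≠ 0 := fun h => by simpa [hone] using congrFun h 0
  have hcpos : 0 < c := by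
    have h := hpd.inv.dotProduct_mulVec_pos hone_ne
    simpa [hc, hy] using h
  -- symmetry of the bilinear form
  have hbil : ∀ x z : Fin (N + 1) → ℝ, x ⬝ᵥ M *ᵥ z = z ⬝ᵥ M *ᵥ x := fun x z => by
    rw [Matrix.dotProduct_mulVec, ← Matrix.mulVec_transpose, hsymm.eq, dotProduct_comm]
  -- positivity of the quadratic form
  have hqpos : ∀ x : Fin (N + 1) → ℝ, x ≠ 0 → 0 < x ⬝ᵥ M *ᵥ x := fun x hx => by
    simpa using hpd.dotProduct_mulVec_pos hx
  -- sum of ξstar is -X₀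
  have hyc : ∑ k, y k = c := by simp [hc, dotProduct, hone]
  have hsum_star : ∑ k, ξstar k = -X₀ := by
    rw [hξstar]
    simp only [← Finset.mul_sum]
    rw [hyc]
    field_simp
  -- quadratic form expansion lemma
  have huniv : ∀ (f : Fin (N + 1) → ℝ) (k : Fin (N + 1)),
      ∑ j, f j = (∑ j ∈ Finset.Iio k, f j) + f k + ∑ j ∈ Finset.Ioi k, f j := by
    intro f k
    have h1 : (Finset.univ : Finset (Fin (N + 1))) = Finset.Iio k ∪ Finset.Ici k := by
      ext j; simp [lt_or_ge]
    rw [h1, Finset.sum_union (by simp [Finset.disjoint_left]),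
      ← Finset.Ioi_insert, Finset.sum_insert (by simp)]
    ring
  have hMd : ∀ k, M k k = G 0 := fun k => by rw [hM]; simp
  have hMlt : ∀ {j k : Fin (N + 1)}, j < k → M k j = G (t k - t j) := by
    intro j k hjk
    rw [hM]
    simp only [Matrix.of_apply]
    rw [abs_of_pos (sub_pos.2 (ht hjk))]
  have hMsym : ∀ j k, M j k = M k j := fun j k => congrFun (congrFun hsymm k) j
  have hQ : ∀ ξ : Fin (N + 1) → ℝ,
      ξ ⬝ᵥ M *ᵥ ξ = 2 * (∑ k, ∑ j ∈ Finset.Iio k, G (t k - t j) * ξ j * ξ k)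
        + G 0 * ∑ k, ξ k ^ 2 := by
    intro ξ
    have expand : ξ ⬝ᵥ M *ᵥ ξ = ∑ k, ∑ j, M k j * ξ k * ξ j := by
      simp only [dotProduct, Matrix.mulVec, Finset.mul_sum]
      exact Finset.sum_congr rfl fun k _ => Finset.sum_congr rfl fun j _ => by ring
    rw [expand]
    have hsplit : ∑ k, ∑ j, M k j * ξ k * ξ j
        = (∑ k, ∑ j ∈ Finset.Iio k, M k j * ξ k * ξ j)
          + (∑ k, M k k * ξ k * ξ k)
          + ∑ k, ∑ j ∈ Finset.Ioi k, M k j * ξ k * ξ j := by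
      rw [← Finset.sum_add_distrib, ← Finset.sum_add_distrib]
      exact Finset.sum_congr rfl fun k _ => huniv _ k
    rw [hsplit]
    have hswap : ∑ k, ∑ j ∈ Finset.Ioi k, M k j * ξ k * ξ j
        = ∑ k, ∑ j ∈ Finset.Iio k, M j k * ξ j * ξ k :=
      Finset.sum_comm' (by intro x y; simp)
    rw [hswap]
    have hL : ∀ (g : Fin (N+1) → Fin (N+1) → ℝ),
        (∀ j k : Fin (N+1), j < k → g k j = G (t k - t j) * ξ j * ξ k) →
        ∑ k, ∑ j ∈ Finset.Iio k, g k j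
          = ∑ k, ∑ j ∈ Finset.Iio k, G (t k - t j) * ξ j * ξ k := by
      intro g hg
      exact Finset.sum_congr rfl fun k _ => Finset.sum_congr rfl fun j hj =>
        hg j k (Finset.mem_Iio.mp hj)
    rw [hL (fun k j => M k j * ξ k * ξ j) (fun j k hjk => by
        show M k j * ξ k * ξ j = _; rw [hMlt hjk]; ring),
      hL (fun k j => M j k * ξ j * ξ k) (fun j k hjk => by
        show M j k * ξ j * ξ k = _; rw [hMsym j k, hMlt hjk])]
    have hD : ∑ k, M k k * ξ k * ξ k = G 0 * ∑ k, ξ k ^ 2 := by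
      rw [Finset.mul_sum]
      exact Finset.sum_congr rfl fun k _ => by rw [hMd k]; ring
    rw [hD]; ring
  -- the closed form of V
  have hVform : ∀ ξ : Fin (N + 1) → ℝ,
      V ξ = -(p₀ * ∑ k, ξ k) - (1 / 2) * (ξ ⬝ᵥ M *ᵥ ξ) := by
    intro ξ
    rw [hV ξ]
    set S : Fin (N + 1) → ℝ := fun k => ∑ j ∈ Finset.Iio k, G (t k - t j) * ξ j with hS
    have key : ∀ ω, (∑ k,
        (((p₀ + σW * W k ω + S k) + G 0 * ξ k) ^ 2
          - (p₀ + σW * W k ω + S k) ^ 2) / (2 * G 0))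
        = ∑ k, ((p₀ + S k) * ξ k + G 0 * ξ k ^ 2 / 2 + (σW * ξ k) * W k ω) := by
      intro ω
      refine Finset.sum_congr rfl fun k _ => ?_
      field_simp
      ring
    have h1 : (∫ ω, ∑ k,
        (((p₀ + σW * W k ω + S k) + G 0 * ξ k) ^ 2
          - (p₀ + σW * W k ω + S k) ^ 2) / (2 * G 0) ∂μ)
        = ∑ k, ((p₀ + S k) * ξ k + G 0 * ξ k ^ 2 / 2) := by
      rw [integral_congr_ae (Filter.Eventually.of_forall key), integral_finset_sum]
      · refine Finset.sum_congr rfl fun k _ => ?_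
        rw [integral_add (integrable_const _) ((hWint k).const_mul _), integral_const,
          integral_const_mul, hWmean k]
        simp
      · intro k _
        exact (integrable_const _).add ((hWint k).const_mul _)
    rw [h1, hQ ξ]
    have h2 : ∑ k, ((p₀ + S k) * ξ k + G 0 * ξ k ^ 2 / 2)
        = p₀ * (∑ k, ξ k) + (∑ k, ∑ j ∈ Finset.Iio k, G (t k - t j) * ξ j * ξ k)
          + (G 0 / 2) * ∑ k, ξ k ^ 2 := by
      rw [Finset.mul_sum, Finset.mul_sum, ← Finset.sum_add_distrib, ← Finset.sum_add_distrib]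
      refine Finset.sum_congr rfl fun k _ => ?_
      simp only [hS]
      rw [add_mul, Finset.sum_mul]
      ring
    rw [h2]; ring
  refine ⟨hsum_star, fun ξ hξ => ?_⟩
  -- expansion around ξstar
  set d : Fin (N + 1) → ℝ := ξ - ξstar with hd
  have hsumd : ∑ k, d k = 0 := by
    simp only [hd, Pi.sub_apply, Finset.sum_sub_distrib, hξ, hsum_star, sub_self]
  have hMstar : M *ᵥ ξstar = fun i => -(X₀ / c) * one i := by
    have : ξstar = (-(X₀ / c)) • y := by
      funext i; rw [hξstar]; simp [hy, hc, smul_eq_mul]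
    rw [this, Matrix.mulVec_smul, hMy]
    funext i; simp [smul_eq_mul]
  have hcross : d ⬝ᵥ M *ᵥ ξstar = 0 := by
    rw [hMstar]
    simp only [dotProduct, hone, mul_one]
    rw [← Finset.sum_mul, hsumd, zero_mul]
  have hexp : ξ ⬝ᵥ M *ᵥ ξ = ξstar ⬝ᵥ M *ᵥ ξstar + d ⬝ᵥ M *ᵥ d := by
    have hξd : ξ = ξstar + d := by funext i; simp [hd]
    rw [hξd, Matrix.mulVec_add, dotProduct_add, add_dotProduct,
      add_dotProduct, ← hbil d ξstar, hcross]
    ring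
  have hVd : V ξstar - V ξ = (1 / 2) * (d ⬝ᵥ M *ᵥ d) := by
    rw [hVform ξ, hVform ξstar, hξ, hsum_star, hexp]; ring
  have hdnn : 0 ≤ d ⬝ᵥ M *ᵥ d := by
    rcases eq_or_ne d 0 with h | h
    · simp [h]
    · exact (hqpos d h).le
  constructor
  · linarith
  · constructor
    · intro hVeq
      have hz : d ⬝ᵥ M *ᵥ d = 0 := by rw [hVeq] at hVd; linarith
      have hd0 : d = 0 := by
        by_contra h
        exact absurd hz (hqpos d h).ne'
      funext i
      have := congrFun hd0 i
      simp only [hd, Pi.sub_apply, Pi.zero_apply, sub_eq_zero] at this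
      exact this
    · intro h; rw [h]
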